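/- arXiv:2207.07849 — 2 statements merged into one kernel-verified Lean document; each statement's English description precedes it below -/
import Mathlib

section
/- Let q₀ > 0 and let q : ℝ×ℝ → ℂ be smooth. For k ∈ ℂ define the 2×2 matrices Q(x,t) = [[0, q],[−q̄, 0]], X(x,t,k) = −ik σ₃ + Q, and T(x,t,k) = [3i|q|⁴ + i|q|² + i(q_{xx} q̄ + q q̄_{xx} − |q_x|²) − 2k(q q̄_x − q_x q̄) − 2ik²(2|q|² + 1) + 8ik⁴ − i(3q₀²+1)q₀²] σ₃ − 4ik² σ₃ Q_x − 8k³ Q + 6i Q² Q_x σ₃ + i σ₃ Q_x + i σ₃ Q_{xxx} + 2k(Q + Q_{xx} − 2Q³). Then the zero-curvature equation ∂_t X − ∂_x T + X T − T X = 0 holds for all k ∈ ℂ and all (x,t) ∈ ℝ² if and only if q satisfies the fourth-order dispersive nonlinear Schrödinger equation i q_t + q_{xx} + 2(|q|² − q₀²) q + q_{xxxx} + 8 q_{xx} |q|² + 2 q̄_{xx} q² + 6 q_x² q̄ + 4 q |q_x|² + 6(|q|⁴ − q₀⁴) q = 0 on ℝ². -/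
noncomputable section

open Matrix Complex

/-- Partial derivative in the first (space) variable. -/
def pdx (f : ℝ → ℝ → ℂ) : ℝ → ℝ → ℂ := fun x t => deriv (fun s => f s t) x

/-- Partial derivative in the second (time) variable. -/
def pdt (f : ℝ → ℝ → ℂ) : ℝ → ℝ → ℂ := fun x t => deriv (fun s => f x s) t

/-- The third Pauli matrix σ₃. -/
def sigma3 : Matrix (Fin 2) (Fin 2) ℂ := !![1, 0; 0, -1]

/-- The potential matrix Q = [[0, q],[−q̄, 0]]. -/
def Qmat (q : ℝ → ℝ → ℂ) (x t : ℝ) : Matrix (Fin 2) (Fin 2) ℂ :=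
  !![0, q x t; -((starRingEnd ℂ) (q x t)), 0]

/-- The space part X = −ik σ₃ + Q of the Lax pair. -/
def Xmat (q : ℝ → ℝ → ℂ) (k : ℂ) (x t : ℝ) : Matrix (Fin 2) (Fin 2) ℂ :=
  (-(I * k)) • sigma3 + Qmat q x t

/-- The time part T of the Lax pair (with γ = 1). -/
def Tmat (q₀ : ℝ) (q : ℝ → ℝ → ℂ) (k : ℂ) (x t : ℝ) : Matrix (Fin 2) (Fin 2) ℂ :=
  (3 * I * (q x t * (starRingEnd ℂ) (q x t)) ^ 2
      + I * (q x t * (starRingEnd ℂ) (q x t))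
      + I * (pdx (pdx q) x t * (starRingEnd ℂ) (q x t)
          + q x t * (starRingEnd ℂ) (pdx (pdx q) x t)
          - pdx q x t * (starRingEnd ℂ) (pdx q x t))
      - 2 * k * (q x t * (starRingEnd ℂ) (pdx q x t)
          - pdx q x t * (starRingEnd ℂ) (q x t))
      - 2 * I * k ^ 2 * (2 * (q x t * (starRingEnd ℂ) (q x t)) + 1)
      + 8 * I * k ^ 4
      - I * (3 * (q₀ : ℂ) ^ 2 + 1) * (q₀ : ℂ) ^ 2) • sigma3
  - (4 * I * k ^ 2) • (sigma3 * Qmat (pdx q) x t)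
  - (8 * k ^ 3) • Qmat q x t
  + (6 * I) • (Qmat q x t ^ 2 * Qmat (pdx q) x t * sigma3)
  + I • (sigma3 * Qmat (pdx q) x t)
  + I • (sigma3 * Qmat (pdx (pdx (pdx q))) x t)
  + (2 * k) • (Qmat q x t + Qmat (pdx (pdx q)) x t - (2 : ℂ) • Qmat q x t ^ 3)

/-! ### Auxiliary material -/

/-- Smoothness of a function of two real variables. -/
def ContDiff2 (f : ℝ → ℝ → ℂ) : Prop :=
  ContDiff ℝ ((⊤ : ℕ∞) : WithTop ℕ∞) (fun p : ℝ × ℝ => f p.1 p.2)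

lemma ContDiff2.hasDerivAt_pdx {f : ℝ → ℝ → ℂ} (hf : ContDiff2 f) (x t : ℝ) :
    HasDerivAt (fun s => f s t) (pdx f x t) x := by
  have h1 : Differentiable ℝ (fun p : ℝ × ℝ => f p.1 p.2) :=
    hf.differentiable (by simp)
  have hd : DifferentiableAt ℝ (fun s => f s t) x :=
    (h1.comp (differentiable_id.prodMk (differentiable_const t))).differentiableAt
  exact hd.hasDerivAt

lemma ContDiff2.hasDerivAt_pdt {f : ℝ → ℝ → ℂ} (hf : ContDiff2 f) (x t : ℝ) :
    HasDerivAt (fun s => f x s) (pdt f x t) t := by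
  have h1 : Differentiable ℝ (fun p : ℝ × ℝ => f p.1 p.2) :=
    hf.differentiable (by simp)
  have hd : DifferentiableAt ℝ (fun s => f x s) t :=
    (h1.comp ((differentiable_const x).prodMk differentiable_id)).differentiableAt
  exact hd.hasDerivAt

open ContDiff in
lemma ContDiff2.pdx {f : ℝ → ℝ → ℂ} (hf : ContDiff2 f) : ContDiff2 (_root_.pdx f) := by
  have h1 : ContDiff ℝ ∞ (fderiv ℝ (fun p : ℝ × ℝ => f p.1 p.2)) :=
    (contDiff_infty_iff_fderiv.mp hf).2
  have h2 : ContDiff ℝ ∞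
      (fun p : ℝ × ℝ => fderiv ℝ (fun p : ℝ × ℝ => f p.1 p.2) p (1, 0)) :=
    (ContinuousLinearMap.apply ℝ ℂ ((1 : ℝ), (0 : ℝ))).contDiff.comp h1
  have h3 : (fun p : ℝ × ℝ => _root_.pdx f p.1 p.2)
      = fun p : ℝ × ℝ => fderiv ℝ (fun p : ℝ × ℝ => f p.1 p.2) p (1, 0) := by
    funext p
    have hdiff : Differentiable ℝ (fun p : ℝ × ℝ => f p.1 p.2) :=
      hf.differentiable (by simp)
    have hD := ((hdiff p).hasFDerivAt.comp_hasDerivAt p.1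
      ((hasDerivAt_id p.1).prodMk (hasDerivAt_const p.1 p.2)))
    exact hD.deriv
  rw [ContDiff2, h3]; exact h2

lemma hasDerivAt_of_eq {f : ℝ → ℂ} {a b : ℂ} {x : ℝ}
    (h : HasDerivAt f a x) (e : a = b) : HasDerivAt f b x := e ▸ h

/-- Entry (0,0) of `Tmat`. -/
def Aex (q₀ : ℝ) (q : ℝ → ℝ → ℂ) (k : ℂ) (x t : ℝ) : ℂ :=
  3 * I * (q x t * (starRingEnd ℂ) (q x t) * (q x t * (starRingEnd ℂ) (q x t)))
  + I * (q x t * (starRingEnd ℂ) (q x t))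
  + I * (pdx (pdx q) x t * (starRingEnd ℂ) (q x t)
      + q x t * (starRingEnd ℂ) (pdx (pdx q) x t)
      - pdx q x t * (starRingEnd ℂ) (pdx q x t))
  - 2 * k * (q x t * (starRingEnd ℂ) (pdx q x t) - pdx q x t * (starRingEnd ℂ) (q x t))
  - 2 * I * k ^ 2 * (2 * (q x t * (starRingEnd ℂ) (q x t)) + 1)
  + 8 * I * k ^ 4
  - I * (3 * (q₀ : ℂ) ^ 2 + 1) * (q₀ : ℂ) ^ 2

/-- Entry (0,1) of `Tmat`. -/
def Bex (q : ℝ → ℝ → ℂ) (k : ℂ) (x t : ℝ) : ℂ :=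
  -(4 * I * k ^ 2 * pdx q x t) - 8 * k ^ 3 * q x t
  + 6 * I * (q x t * (starRingEnd ℂ) (q x t) * pdx q x t)
  + I * pdx q x t + I * pdx (pdx (pdx q)) x t
  + 2 * k * (q x t + pdx (pdx q) x t + 2 * (q x t * (q x t * (starRingEnd ℂ) (q x t))))

/-- Entry (1,0) of `Tmat`. -/
def Cex (q : ℝ → ℝ → ℂ) (k : ℂ) (x t : ℝ) : ℂ :=
  -(4 * I * k ^ 2 * (starRingEnd ℂ) (pdx q x t)) + 8 * k ^ 3 * (starRingEnd ℂ) (q x t)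
  + 6 * I * (q x t * (starRingEnd ℂ) (q x t) * (starRingEnd ℂ) (pdx q x t))
  + I * (starRingEnd ℂ) (pdx q x t) + I * (starRingEnd ℂ) (pdx (pdx (pdx q)) x t)
  - 2 * k * ((starRingEnd ℂ) (q x t) + (starRingEnd ℂ) (pdx (pdx q) x t)
      + 2 * ((starRingEnd ℂ) (q x t) * (q x t * (starRingEnd ℂ) (q x t))))

/-- The fourth-order NLS expression. -/
def Pde (q₀ : ℝ) (q : ℝ → ℝ → ℂ) (x t : ℝ) : ℂ :=
  I * pdt q x t + pdx (pdx q) x t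
    + 2 * (q x t * (starRingEnd ℂ) (q x t) - (q₀ : ℂ) ^ 2) * q x t
    + pdx (pdx (pdx (pdx q))) x t
    + 8 * pdx (pdx q) x t * (q x t * (starRingEnd ℂ) (q x t))
    + 2 * (starRingEnd ℂ) (pdx (pdx q) x t) * q x t ^ 2
    + 6 * (pdx q x t) ^ 2 * (starRingEnd ℂ) (q x t)
    + 4 * q x t * (pdx q x t * (starRingEnd ℂ) (pdx q x t))
    + 6 * ((q x t * (starRingEnd ℂ) (q x t)) ^ 2 - (q₀ : ℂ) ^ 4) * q x t

lemma Xmat_apply (q : ℝ → ℝ → ℂ) (k : ℂ) (x t : ℝ) :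
    Xmat q k x t = !![-(I * k), q x t; -((starRingEnd ℂ) (q x t)), I * k] := by
  ext i j
  fin_cases i <;> fin_cases j <;> simp [Xmat, sigma3, Qmat] <;> ring_nf

set_option maxHeartbeats 1600000 in
lemma Tmat_apply (q₀ : ℝ) (q : ℝ → ℝ → ℂ) (k : ℂ) (x t : ℝ) :
    Tmat q₀ q k x t =
      !![Aex q₀ q k x t, Bex q k x t; Cex q k x t, -(Aex q₀ q k x t)] := by
  ext i j
  fin_cases i <;> fin_cases j <;>
    simp only [Tmat, Qmat, sigma3, Aex, Bex, Cex, pow_succ, pow_zero, one_mul,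
      Matrix.sub_apply, Matrix.add_apply, Matrix.smul_apply, Matrix.mul_apply,
      Fin.sum_univ_two, Matrix.cons_val', Matrix.cons_val_zero, Matrix.cons_val_one,
      Matrix.head_cons, Matrix.head_fin_const, Matrix.empty_val',
      Matrix.cons_val_fin_one, smul_eq_mul, Fin.zero_eta, Fin.mk_one,
      Matrix.of_apply] <;> ring

set_option maxHeartbeats 3200000 in
lemma key (q₀ : ℝ) (q : ℝ → ℝ → ℂ) (hq : ContDiff2 q) (k : ℂ) (x t : ℝ) :
    (Matrix.of fun i j => deriv (fun s => Xmat q k x s i j) t)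
      - (Matrix.of fun i j => deriv (fun s => Tmat q₀ q k s t i j) x)
      + Xmat q k x t * Tmat q₀ q k x t - Tmat q₀ q k x t * Xmat q k x t
    = !![0, -(I * Pde q₀ q x t); -(I * (starRingEnd ℂ) (Pde q₀ q x t)), 0] := by
  have hq1 : ContDiff2 (pdx q) := hq.pdx
  have hq2 : ContDiff2 (pdx (pdx q)) := hq1.pdx
  have hq3 : ContDiff2 (pdx (pdx (pdx q))) := hq2.pdx
  have d0 : HasDerivAt (fun s => q s t) (pdx q x t) x := hq.hasDerivAt_pdx x t
  have d1 : HasDerivAt (fun s => pdx q s t) (pdx (pdx q) x t) x := hq1.hasDerivAt_pdx x t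
  have d2 : HasDerivAt (fun s => pdx (pdx q) s t) (pdx (pdx (pdx q)) x t) x :=
    hq2.hasDerivAt_pdx x t
  have d3 : HasDerivAt (fun s => pdx (pdx (pdx q)) s t) (pdx (pdx (pdx (pdx q))) x t) x :=
    hq3.hasDerivAt_pdx x t
  have e0 : HasDerivAt (fun s => (starRingEnd ℂ) (q s t))
      ((starRingEnd ℂ) (pdx q x t)) x := by
    simpa only [starRingEnd_apply] using d0.star
  have e1 : HasDerivAt (fun s => (starRingEnd ℂ) (pdx q s t))
      ((starRingEnd ℂ) (pdx (pdx q) x t)) x := by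
    simpa only [starRingEnd_apply] using d1.star
  have e2 : HasDerivAt (fun s => (starRingEnd ℂ) (pdx (pdx q) s t))
      ((starRingEnd ℂ) (pdx (pdx (pdx q)) x t)) x := by
    simpa only [starRingEnd_apply] using d2.star
  have e3 : HasDerivAt (fun s => (starRingEnd ℂ) (pdx (pdx (pdx q)) s t))
      ((starRingEnd ℂ) (pdx (pdx (pdx (pdx q))) x t)) x := by
    simpa only [starRingEnd_apply] using d3.star
  have hA : HasDerivAt (fun s => Aex q₀ q k s t)
      (6 * I * ((q x t * (starRingEnd ℂ) (q x t))
          * (pdx q x t * (starRingEnd ℂ) (q x t) + q x t * (starRingEnd ℂ) (pdx q x t)))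
        + I * (pdx q x t * (starRingEnd ℂ) (q x t) + q x t * (starRingEnd ℂ) (pdx q x t))
        + I * (pdx (pdx (pdx q)) x t * (starRingEnd ℂ) (q x t)
            + q x t * (starRingEnd ℂ) (pdx (pdx (pdx q)) x t))
        - 2 * k * (q x t * (starRingEnd ℂ) (pdx (pdx q) x t)
            - pdx (pdx q) x t * (starRingEnd ℂ) (q x t))
        - 4 * I * k ^ 2 * (pdx q x t * (starRingEnd ℂ) (q x t)
            + q x t * (starRingEnd ℂ) (pdx q x t))) x :=
    hasDerivAt_of_eq
      (((((((((d0.mul e0).mul (d0.mul e0)).const_mul (3 * I)).add ((d0.mul e0).const_mul I)).add ((((d2.mul e0).add (d0.mul e2)).sub (d1.mul e1)).const_mul I)).sub (((d0.mul e1).sub (d1.mul e0)).const_mul (2 * k))).sub ((((d0.mul e0).const_mul 2).add_const 1).const_mul (2 * I * k ^ 2))).add (hasDerivAt_const x (8 * I * k ^ 4))).sub (hasDerivAt_const x (I * (3 * (q₀ : ℂ) ^ 2 + 1) * (q₀ : ℂ) ^ 2)))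
      (by simp only [Pi.mul_apply, Pi.add_apply, Pi.sub_apply, Pi.neg_apply]; ring)
  have hB : HasDerivAt (fun s => Bex q k s t)
      (-(4 * I * k ^ 2 * pdx (pdx q) x t) - 8 * k ^ 3 * pdx q x t
        + 6 * I * (pdx q x t * (starRingEnd ℂ) (q x t) * pdx q x t
            + q x t * (starRingEnd ℂ) (pdx q x t) * pdx q x t
            + q x t * (starRingEnd ℂ) (q x t) * pdx (pdx q) x t)
        + I * pdx (pdx q) x t + I * pdx (pdx (pdx (pdx q))) x t
        + 2 * k * (pdx q x t + pdx (pdx (pdx q)) x t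
            + 2 * (pdx q x t * (q x t * (starRingEnd ℂ) (q x t))
                + q x t * (pdx q x t * (starRingEnd ℂ) (q x t)
                    + q x t * (starRingEnd ℂ) (pdx q x t))))) x :=
    hasDerivAt_of_eq
      (((((((d1.const_mul (4 * I * k ^ 2)).neg).sub (d0.const_mul (8 * k ^ 3))).add (((d0.mul e0).mul d1).const_mul (6 * I))).add (d1.const_mul I)).add (d3.const_mul I)).add (((d0.add d2).add ((d0.mul (d0.mul e0)).const_mul 2)).const_mul (2 * k)))
      (by simp only [Pi.mul_apply, Pi.add_apply, Pi.sub_apply, Pi.neg_apply]; ring)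
  have hC : HasDerivAt (fun s => Cex q k s t)
      (-(4 * I * k ^ 2 * (starRingEnd ℂ) (pdx (pdx q) x t))
        + 8 * k ^ 3 * (starRingEnd ℂ) (pdx q x t)
        + 6 * I * (pdx q x t * (starRingEnd ℂ) (q x t) * (starRingEnd ℂ) (pdx q x t)
            + q x t * (starRingEnd ℂ) (pdx q x t) * (starRingEnd ℂ) (pdx q x t)
            + q x t * (starRingEnd ℂ) (q x t) * (starRingEnd ℂ) (pdx (pdx q) x t))
        + I * (starRingEnd ℂ) (pdx (pdx q) x t)
        + I * (starRingEnd ℂ) (pdx (pdx (pdx (pdx q))) x t)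
        - 2 * k * ((starRingEnd ℂ) (pdx q x t) + (starRingEnd ℂ) (pdx (pdx (pdx q)) x t)
            + 2 * ((starRingEnd ℂ) (pdx q x t) * (q x t * (starRingEnd ℂ) (q x t))
                + (starRingEnd ℂ) (q x t) * (pdx q x t * (starRingEnd ℂ) (q x t)
                    + q x t * (starRingEnd ℂ) (pdx q x t))))) x :=
    hasDerivAt_of_eq
      (((((((e1.const_mul (4 * I * k ^ 2)).neg).add (e0.const_mul (8 * k ^ 3))).add (((d0.mul e0).mul e1).const_mul (6 * I))).add (e1.const_mul I)).add (e3.const_mul I)).sub (((e0.add e2).add ((e0.mul (d0.mul e0)).const_mul 2)).const_mul (2 * k)))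
      (by simp only [Pi.mul_apply, Pi.add_apply, Pi.sub_apply, Pi.neg_apply]; ring)
  have hAd := hA.deriv
  have hBd := hB.deriv
  have hCd := hC.deriv
  have hDd : deriv (fun s => -(Aex q₀ q k s t)) x
      = -(6 * I * ((q x t * (starRingEnd ℂ) (q x t))
          * (pdx q x t * (starRingEnd ℂ) (q x t) + q x t * (starRingEnd ℂ) (pdx q x t)))
        + I * (pdx q x t * (starRingEnd ℂ) (q x t) + q x t * (starRingEnd ℂ) (pdx q x t))
        + I * (pdx (pdx (pdx q)) x t * (starRingEnd ℂ) (q x t)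
            + q x t * (starRingEnd ℂ) (pdx (pdx (pdx q)) x t))
        - 2 * k * (q x t * (starRingEnd ℂ) (pdx (pdx q) x t)
            - pdx (pdx q) x t * (starRingEnd ℂ) (q x t))
        - 4 * I * k ^ 2 * (pdx q x t * (starRingEnd ℂ) (q x t)
            + q x t * (starRingEnd ℂ) (pdx q x t))) := hA.neg.deriv
  have hq01 : deriv (fun s => q x s) t = pdt q x t := rfl
  have hq10 : deriv (fun s => -((starRingEnd ℂ) (q x s))) t
      = -((starRingEnd ℂ) (pdt q x t)) := by
    refine HasDerivAt.deriv ?_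
    simpa only [starRingEnd_apply, Pi.neg_def] using (hq.hasDerivAt_pdt x t).star.neg
  have hxt : ∀ s, Xmat q k x s
      = !![-(I * k), q x s; -((starRingEnd ℂ) (q x s)), I * k] :=
    fun s => Xmat_apply q k x s
  have ht : ∀ s, Tmat q₀ q k s t
      = !![Aex q₀ q k s t, Bex q k s t; Cex q k s t, -(Aex q₀ q k s t)] :=
    fun s => Tmat_apply q₀ q k s t
  ext i j
  fin_cases i <;> fin_cases j <;>
    simp only [hxt, ht, Matrix.of_apply, Matrix.sub_apply, Matrix.add_apply,
      Matrix.mul_apply, Fin.sum_univ_two, Matrix.cons_val', Matrix.cons_val_zero,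
      Matrix.cons_val_one, Matrix.head_cons, Matrix.head_fin_const, Matrix.empty_val',
      Matrix.cons_val_fin_one, Fin.zero_eta, Fin.mk_one, deriv_const'] <;>
    simp only [hAd, hBd, hCd, hDd, hq01, hq10] <;>
    simp only [Aex, Bex, Cex, Pde, _root_.map_add, _root_.map_sub, _root_.map_mul, map_pow, map_ofNat,
      Complex.conj_conj, Complex.conj_I, Complex.conj_ofReal, _root_.map_one] <;>
    (first
      | ring1
      | (ring_nf
         simp only [Complex.I_sq, Complex.I_pow_four, pow_succ, Complex.I_mul_I]
         ring1)
      | (ring_nf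
         simp only [Complex.I_sq]
         ring1))

/-- The zero-curvature equation ∂ₜX − ∂ₓT + XT − TX = 0 holds for all k iff q solves the
fourth-order dispersive NLS equation (γ = 1) with nonzero background q₀. -/
theorem zero_curvature_iff_fourth_order_NLS (q₀ : ℝ) (hq₀ : 0 < q₀) (q : ℝ → ℝ → ℂ)
    (hq : ContDiff ℝ ((⊤ : ℕ∞) : WithTop ℕ∞) (fun p : ℝ × ℝ => q p.1 p.2)) :
    (∀ (k : ℂ) (x t : ℝ),
        (Matrix.of fun i j => deriv (fun s => Xmat q k x s i j) t)
          - (Matrix.of fun i j => deriv (fun s => Tmat q₀ q k s t i j) x)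
          + Xmat q k x t * Tmat q₀ q k x t - Tmat q₀ q k x t * Xmat q k x t = 0)
    ↔ (∀ x t : ℝ,
        I * pdt q x t + pdx (pdx q) x t
          + 2 * (q x t * (starRingEnd ℂ) (q x t) - (q₀ : ℂ) ^ 2) * q x t
          + pdx (pdx (pdx (pdx q))) x t
          + 8 * pdx (pdx q) x t * (q x t * (starRingEnd ℂ) (q x t))
          + 2 * (starRingEnd ℂ) (pdx (pdx q) x t) * q x t ^ 2
          + 6 * (pdx q x t) ^ 2 * (starRingEnd ℂ) (q x t)
          + 4 * q x t * (pdx q x t * (starRingEnd ℂ) (pdx q x t))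
          + 6 * ((q x t * (starRingEnd ℂ) (q x t)) ^ 2 - (q₀ : ℂ) ^ 4) * q x t = 0) := by
  constructor
  · intro h x t
    have hk := (key q₀ q hq 0 x t).symm.trans (h 0 x t)
    have h01 := (Matrix.ext_iff.2 hk) 0 1
    simp only [Matrix.cons_val', Matrix.cons_val_zero, Matrix.cons_val_one,
      Matrix.head_cons, Matrix.empty_val', Matrix.cons_val_fin_one,
      Matrix.head_fin_const, Matrix.zero_apply, Matrix.of_apply,
      neg_eq_zero, mul_eq_zero, I_ne_zero, false_or] at h01
    exact h01
  · intro h k x t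
    rw [key q₀ q hq k x t]
    have h0 : Pde q₀ q x t = 0 := h x t
    rw [h0]
    ext i j
    fin_cases i <;> fin_cases j <;> simp
end
end

section
/- Let a, b, d ∈ ℂ with a ≠ 0, d ≠ 0, let θ ∈ ℂ, and let Ψ₊, Ψ₋ ∈ M₂(ℂ) with det Ψ₊ = det Ψ₋ = d and Ψ₋ = Ψ₊ s where s = [[a, −b̄],[b, ā]] (bars denoting complex conjugation). Set γ = b/a and define m₊ to be the matrix whose first column is e^{iθ}·(first column of Ψ₋)/(a d) and whose second column is e^{−iθ}·(second column of Ψ₊), and m₋ the matrix whose first column is e^{iθ}·(first column of Ψ₊) and whose second column is e^{−iθ}·(second column of Ψ₋)/(ā d). Then m₊ = m₋ J with J = [[(1 + γ γ̄)/d, γ̄ e^{−2iθ}],[γ e^{2iθ}, d]]. -/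
set_option maxHeartbeats 1000000


noncomputable section

open Matrix Complex

/-- The jump relation m₊ = m₋ J of the basic Riemann–Hilbert problem across the real
axis, with reflection coefficient γ = b/a. -/
theorem jump_relation (a b d θ : ℂ) (ha : a ≠ 0) (hd : d ≠ 0)
    (Ψp Ψm : Matrix (Fin 2) (Fin 2) ℂ)
    (hdetp : Ψp.det = d) (hdetm : Ψm.det = d)
    (hs : Ψm = Ψp * !![a, -((starRingEnd ℂ) b); b, (starRingEnd ℂ) a]) :
    let γ : ℂ := b / a
    let mp : Matrix (Fin 2) (Fin 2) ℂ :=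
      !![Complex.exp (I * θ) * Ψm 0 0 / (a * d), Complex.exp (-(I * θ)) * Ψp 0 1;
         Complex.exp (I * θ) * Ψm 1 0 / (a * d), Complex.exp (-(I * θ)) * Ψp 1 1]
    let mm : Matrix (Fin 2) (Fin 2) ℂ :=
      !![Complex.exp (I * θ) * Ψp 0 0,
           Complex.exp (-(I * θ)) * Ψm 0 1 / ((starRingEnd ℂ) a * d);
         Complex.exp (I * θ) * Ψp 1 0,
           Complex.exp (-(I * θ)) * Ψm 1 1 / ((starRingEnd ℂ) a * d)]
    let J : Matrix (Fin 2) (Fin 2) ℂ :=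
      !![(1 + γ * (starRingEnd ℂ) γ) / d, (starRingEnd ℂ) γ * Complex.exp (-(2 * I * θ));
         γ * Complex.exp (2 * I * θ), d]
    mp = mm * J := by
  intro γ mp mm J
  have hA : (starRingEnd ℂ) a ≠ 0 := by simpa using ha
  have e00 : Ψm 0 0 = Ψp 0 0 * a + Ψp 0 1 * b := by
    rw [hs]; simp [Matrix.mul_apply, Fin.sum_univ_two]
  have e10 : Ψm 1 0 = Ψp 1 0 * a + Ψp 1 1 * b := by
    rw [hs]; simp [Matrix.mul_apply, Fin.sum_univ_two]
  have e01 : Ψm 0 1 = Ψp 0 0 * (-(starRingEnd ℂ) b) + Ψp 0 1 * (starRingEnd ℂ) a := by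
    rw [hs]; simp [Matrix.mul_apply, Fin.sum_univ_two]
  have e11 : Ψm 1 1 = Ψp 1 0 * (-(starRingEnd ℂ) b) + Ψp 1 1 * (starRingEnd ℂ) a := by
    rw [hs]; simp [Matrix.mul_apply, Fin.sum_univ_two]
  have hneg : Complex.exp (-(I * θ)) = (Complex.exp (I * θ))⁻¹ := Complex.exp_neg _
  have h2 : Complex.exp (2 * I * θ) = Complex.exp (I * θ) * Complex.exp (I * θ) := by
    rw [← Complex.exp_add]; ring_nf
  have h2' : Complex.exp (-(2 * I * θ)) =
      (Complex.exp (I * θ) * Complex.exp (I * θ))⁻¹ := by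
    rw [← h2, Complex.exp_neg]
  have hne := Complex.exp_ne_zero (I * θ)
  ext i j
  fin_cases i <;> fin_cases j <;>
    simp only [mp, mm, J, γ, Matrix.mul_apply, Fin.sum_univ_two, Matrix.cons_val',
      Matrix.cons_val_zero, Matrix.cons_val_one, Matrix.head_cons, Matrix.head_fin_const,
      Matrix.empty_val', Matrix.cons_val_fin_one, Fin.zero_eta, Fin.mk_one, Matrix.of_apply,
      Matrix.cons_val, map_div₀, e00, e10, e01, e11, hneg, h2, h2']
  all_goals field_simp [hne, ha, hA, hd]
  all_goals ring_nf
  all_goals try field_simp [hne, ha, hA, hd]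
  all_goals try ring
end
end
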